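/- arXiv:1511.06875 — 3 statements merged into one kernel-verified Lean document; each statement's English description precedes it below -/
import Mathlib

section
/- For a commutative monoid M and a commutative ring B, localization commutes with forming the monoid algebra: if S is a multiplicative subset of M, then the localization of B[M] at the image of S is isomorphic as a B-algebra to B[S^{-1}M]. -/
set_option synthInstance.maxHeartbeats 400000

/-- The ideal of the monoid algebra `B[M]` generated by the basis element corresponding to
the absorbing element `0 ∈ M`. -/
noncomputable def zeroIdeal (B : Type*) [CommRing B] (M : Type*) [CommMonoidWithZero M] :
    Ideal (MonoidAlgebra B M) :=
  Ideal.span {MonoidAlgebra.single (0 : M) (1 : B)}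

/-- The contracted monoid algebra `B[M]`: the quotient of the usual monoid algebra by the
ideal generated by the basis element of `0 ∈ M`. -/
noncomputable abbrev ContractedMonoidAlgebra (B : Type*) [CommRing B] (M : Type*)
    [CommMonoidWithZero M] : Type _ :=
  MonoidAlgebra B M ⧸ zeroIdeal B M

/-- The canonical multiplicative map `M →* B[M]`, `m ↦ [single m 1]`. -/
noncomputable def monoidToContracted (B : Type*) [CommRing B] (M : Type*)
    [CommMonoidWithZero M] : M →* ContractedMonoidAlgebra B M :=
  ((Ideal.Quotient.mk (zeroIdeal B M)).toMonoidHom).comp (MonoidAlgebra.of B M)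

section Aux
variable {B : Type*} [CommRing B] {M : Type*} [CommMonoidWithZero M]

lemma mem_zeroIdeal_iff {x : MonoidAlgebra B M} :
    x ∈ zeroIdeal B M ↔ ∀ m : M, m ≠ 0 → x.coeff m = 0 := by
  constructor
  · intro hx
    obtain ⟨y, rfl⟩ := Ideal.mem_span_singleton'.mp hx
    clear hx
    induction y using MonoidAlgebra.induction_linear with
    | zero => simp
    | add p q hp hq =>
        intro m hm
        rw [add_mul]
        simpa using congrArg₂ (· + ·) (hp m hm) (hq m hm)
    | single a b =>
        intro m hm
        rw [MonoidAlgebra.single_mul_single, mul_zero, mul_one]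
        exact Finsupp.single_eq_of_ne' (Ne.symm hm)
  · intro hx
    have : x = MonoidAlgebra.single (0 : M) (x.coeff 0) := by
      ext m
      by_cases hm : m = 0
      · subst hm; simp
      · rw [hx m hm, MonoidAlgebra.coeff_single, Finsupp.single_eq_of_ne' (Ne.symm hm)]
    rw [this]
    exact Ideal.mem_span_singleton'.mpr ⟨MonoidAlgebra.single 0 (x.coeff 0), by
      rw [MonoidAlgebra.single_mul_single, mul_zero, mul_one]⟩

lemma eq_single_of_mem_zeroIdeal {x : MonoidAlgebra B M} (hx : x ∈ zeroIdeal B M) :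
    x = MonoidAlgebra.single 0 (x.coeff 0) := by
  have h := mem_zeroIdeal_iff.mp hx
  ext m
  by_cases hm : m = 0
  · subst hm; simp
  · rw [h m hm, MonoidAlgebra.coeff_single, Finsupp.single_eq_of_ne' (Ne.symm hm)]

lemma single_one_mul_eq (a : M) (d : MonoidAlgebra B M) :
    MonoidAlgebra.single a (1 : B) * d = MonoidAlgebra.mapDomain (fun m => a * m) d := by
  induction d using MonoidAlgebra.induction_linear with
  | zero => simp
  | add p q hp hq => rw [mul_add, MonoidAlgebra.mapDomain_add, hp, hq]
  | single m b => rw [MonoidAlgebra.single_mul_single, one_mul, MonoidAlgebra.mapDomain_single]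

end Aux

section Key
variable {B : Type*} [CommRing B] {M : Type*} [CommMonoidWithZero M]
  {N : Type*} [CommMonoidWithZero N] {S : Submonoid M}

lemma exists_mult (T : Finset M) (f : S.LocalizationMap N) :
    ∃ s : S, ∀ m ∈ T, ∀ m' ∈ T, f.toMonoidHom m = f.toMonoidHom m' → (s : M) * m = (s : M) * m' := by
  classical
  choose g hg using fun (p : M × M) (h : f.toMonoidHom p.1 = f.toMonoidHom p.2) => f.eq_iff_exists.mp h
  refine ⟨∏ p ∈ T ×ˢ T, if h : f.toMonoidHom p.1 = f.toMonoidHom p.2 then g p h else 1, ?_⟩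
  intro m hm m' hm' h
  have hp : (m, m') ∈ T ×ˢ T := Finset.mem_product.mpr ⟨hm, hm'⟩
  rw [← Finset.mul_prod_erase _ _ hp, dif_pos h]
  push_cast
  rw [mul_right_comm, hg _ h, mul_right_comm]

lemma key (f : S.LocalizationMap N) (hf0 : f.toMonoidHom 0 = 0) (d : MonoidAlgebra B M)
    (hd : MonoidAlgebra.mapDomain f.toMonoidHom d ∈ zeroIdeal B N) :
    ∃ s : S, MonoidAlgebra.single ((s : M)) (1 : B) * d ∈ zeroIdeal B M := by
  classical
  obtain ⟨s, hs⟩ := exists_mult (insert 0 d.coeff.support) f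
  refine ⟨s, ?_⟩
  rw [single_one_mul_eq, mem_zeroIdeal_iff]
  set e : MonoidAlgebra B M := MonoidAlgebra.mapDomain (fun m => (s : M) * m) d with he_def
  intro k hk
  by_cases hke : k ∈ e.coeff.support
  swap
  · exact Finsupp.notMem_support_iff.mp hke
  set U : Set M := (fun m => (s : M) * m) '' ((insert 0 d.coeff.support : Finset M) : Set M) with hU
  have hsub : (e.coeff.support : Set M) ⊆ U := by
    intro a ha
    have h2 := Finsupp.mapDomain_support (f := fun m => (s : M) * m) (s := d.coeff) ha
    rw [Finset.mem_image] at h2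
    obtain ⟨m, hm, rfl⟩ := h2
    exact ⟨m, by simp [hm], rfl⟩
  have hfsu : IsUnit (f.toMonoidHom s) := f.map_units s
  have hinj : Set.InjOn f.toMonoidHom U := by
    rintro _ ⟨a, ha, rfl⟩ _ ⟨b, hb, rfl⟩ hfe
    rw [map_mul, map_mul] at hfe
    exact hs a (by simpa using ha) b (by simpa using hb) (hfsu.mul_left_cancel hfe)
  obtain ⟨m₀, hm₀, rfl⟩ := hsub hke
  have hmem : ((s : M) * m₀) ∈ U := ⟨m₀, hm₀, rfl⟩
  have happ := Finsupp.mapDomain_apply' U e.coeff hsub hinj hmem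
  have he : (MonoidAlgebra.mapDomain f.toMonoidHom e : MonoidAlgebra B N) =
      MonoidAlgebra.mapDomain (fun n => f.toMonoidHom (s : M) * n)
        ((MonoidAlgebra.mapDomain f.toMonoidHom d : MonoidAlgebra B N)) := by
    apply MonoidAlgebra.coeff_injective
    simp only [MonoidAlgebra.coeff_mapDomain]
    rw [he_def, MonoidAlgebra.coeff_mapDomain, ← Finsupp.mapDomain_comp, ← Finsupp.mapDomain_comp]
    congr 1
    funext m
    exact map_mul f.toMonoidHom _ _
  have hd' := eq_single_of_mem_zeroIdeal hd
  have hfk0 : f.toMonoidHom ((s : M) * m₀) ≠ 0 := by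
    intro h
    have h0U : (0 : M) ∈ U := ⟨0, by simp, by simp⟩
    have : f.toMonoidHom ((s : M) * m₀) = f.toMonoidHom ((s : M) * 0) := by
      rw [h, mul_zero, hf0]
    have h2 := hinj hmem (⟨0, by simp, rfl⟩ : ((s:M)*0) ∈ U) this
    rw [mul_zero] at h2
    exact hk h2
  have hval : (MonoidAlgebra.mapDomain f.toMonoidHom e).coeff (f.toMonoidHom ((s : M) * m₀)) = 0 := by
    rw [he, hd', MonoidAlgebra.mapDomain_single, mul_zero]
    exact Finsupp.single_eq_of_ne' (Ne.symm hfk0)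
  rw [MonoidAlgebra.coeff_mapDomain, happ] at hval
  exact hval

end Key

section Main
variable (B : Type*) [CommRing B] {M : Type*} [CommMonoidWithZero M]
  {N : Type*} [CommMonoidWithZero N] {S : Submonoid M}
  (f : S.LocalizationMap N)

lemma mapDomainRingHom_eq (x : MonoidAlgebra B M) :
    MonoidAlgebra.mapDomainRingHom B f.toMonoidHom x = MonoidAlgebra.mapDomain f.toMonoidHom x := rfl

/-- The induced ring hom between contracted monoid algebras. -/
noncomputable def contractedMap (hf0 : f.toMonoidHom 0 = 0) :
    ContractedMonoidAlgebra B M →+* ContractedMonoidAlgebra B N :=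
  Ideal.Quotient.lift (zeroIdeal B M)
    ((Ideal.Quotient.mk (zeroIdeal B N)).comp (MonoidAlgebra.mapDomainRingHom B f.toMonoidHom))
    (by
      intro a ha
      obtain ⟨y, rfl⟩ := Ideal.mem_span_singleton'.mp ha
      rw [RingHom.comp_apply, map_mul, Ideal.Quotient.eq_zero_iff_mem]
      refine Ideal.mul_mem_left _ _ ?_
      have h1 : (MonoidAlgebra.mapDomainRingHom B f.toMonoidHom) (MonoidAlgebra.single (0 : M) (1 : B))
          = MonoidAlgebra.single (0 : N) (1 : B) := by
        rw [mapDomainRingHom_eq, MonoidAlgebra.mapDomain_single, hf0]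
      rw [h1]
      exact Ideal.subset_span rfl)

lemma contractedMap_mk (hf0 : f.toMonoidHom 0 = 0) (a : MonoidAlgebra B M) :
    contractedMap B f hf0 (Ideal.Quotient.mk (zeroIdeal B M) a) =
      Ideal.Quotient.mk (zeroIdeal B N) (MonoidAlgebra.mapDomainRingHom B f.toMonoidHom a) :=
  rfl

lemma surj_aux (w : MonoidAlgebra B N) :
    ∃ (a : MonoidAlgebra B M) (s : S), w * MonoidAlgebra.single (f.toMonoidHom s) (1 : B) =
      MonoidAlgebra.mapDomainRingHom B f.toMonoidHom a := by
  classical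
  induction w using MonoidAlgebra.induction_linear with
  | zero => exact ⟨0, 1, by simp⟩
  | add p q hp hq =>
      obtain ⟨a, s, ha⟩ := hp
      obtain ⟨b, t, hb⟩ := hq
      refine ⟨a * MonoidAlgebra.single (t : M) 1 + b * MonoidAlgebra.single (s : M) 1,
        s * t, ?_⟩
      rw [map_add, map_mul, map_mul,
        mapDomainRingHom_eq B f (MonoidAlgebra.single (t : M) 1),
        mapDomainRingHom_eq B f (MonoidAlgebra.single (s : M) 1),
        MonoidAlgebra.mapDomain_single, MonoidAlgebra.mapDomain_single, ← ha, ← hb,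
        add_mul, Submonoid.coe_mul, map_mul]
      have h2 : MonoidAlgebra.single (f.toMonoidHom s) (1 : B) * MonoidAlgebra.single (f.toMonoidHom t) 1
          = MonoidAlgebra.single (f.toMonoidHom s * f.toMonoidHom t) 1 := by
        rw [MonoidAlgebra.single_mul_single, one_mul]
      rw [← h2]
      ring
  | single n b =>
      obtain ⟨⟨m, s⟩, hms⟩ := f.surj n
      refine ⟨MonoidAlgebra.single m b, s, ?_⟩
      simp only [← f.toMonoidHom_apply] at hms
      rw [MonoidAlgebra.single_mul_single, mul_one, hms, mapDomainRingHom_eq,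
        MonoidAlgebra.mapDomain_single]

end Main

/-- **Localization commutes with forming the monoid algebra.** If `S ⊆ M` is a submonoid not
containing `0` and `N` is a localization of `M` at `S` (witnessed by a localization map
`f : M → N`), then the localization of `B[M]` at the image of `S` is isomorphic, compatibly
with the `B`-algebra structures, to `B[S⁻¹M] = B[N]`. -/
theorem stmt_8 (B : Type*) [CommRing B] (M : Type*) [CommMonoidWithZero M]
    (S : Submonoid M) (h0 : (0 : M) ∉ S)
    (N : Type*) [CommMonoidWithZero N] (f : Submonoid.LocalizationMap S N)
    (hf0 : f.toMonoidHom 0 = 0) :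
    ∃ e : Localization (S.map (monoidToContracted B M)) ≃+* ContractedMonoidAlgebra B N,
      (∀ b : B, e (algebraMap (ContractedMonoidAlgebra B M) _
          (Ideal.Quotient.mk (zeroIdeal B M) (MonoidAlgebra.single (1 : M) b))) =
        Ideal.Quotient.mk (zeroIdeal B N) (MonoidAlgebra.single (1 : N) b)) ∧
      (∀ m : M, e (algebraMap (ContractedMonoidAlgebra B M) _
          (Ideal.Quotient.mk (zeroIdeal B M) (MonoidAlgebra.single m (1 : B)))) =
        Ideal.Quotient.mk (zeroIdeal B N) (MonoidAlgebra.single (f.toMonoidHom m) (1 : B))) := by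
  classical
  letI : Algebra (ContractedMonoidAlgebra B M) (ContractedMonoidAlgebra B N) :=
    (contractedMap B f hf0).toAlgebra
  have halg : (algebraMap (ContractedMonoidAlgebra B M) (ContractedMonoidAlgebra B N)) =
      contractedMap B f hf0 := rfl
  haveI : IsLocalization (S.map (monoidToContracted B M)) (ContractedMonoidAlgebra B N) := by
    refine ⟨?_, ?_, ?_⟩
    · rintro ⟨-, s, hsS, rfl⟩
      rw [halg]
      show IsUnit (contractedMap B f hf0
        (Ideal.Quotient.mk (zeroIdeal B M) (MonoidAlgebra.single s 1)))
      rw [contractedMap_mk, mapDomainRingHom_eq, MonoidAlgebra.mapDomain_single]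
      obtain ⟨u, hu⟩ := f.map_units ⟨s, hsS⟩
      refine IsUnit.of_mul_eq_one
        (Ideal.Quotient.mk _ (MonoidAlgebra.single ((u⁻¹ : Nˣ) : N) 1)) ?_
      rw [← map_mul, MonoidAlgebra.single_mul_single, mul_one]
      have h2 : f.toMonoidHom s * ((u⁻¹ : Nˣ) : N) = 1 := by
        rw [f.toMonoidHom_apply, ← hu]; exact u.mul_inv
      rw [h2, ← MonoidAlgebra.one_def, map_one]
    · intro z
      obtain ⟨w, rfl⟩ := Ideal.Quotient.mk_surjective z
      obtain ⟨a, s, hws⟩ := surj_aux B f w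
      refine ⟨(Ideal.Quotient.mk _ a,
        ⟨monoidToContracted B M s, ⟨s, s.2, rfl⟩⟩), ?_⟩
      rw [halg]
      show Ideal.Quotient.mk (zeroIdeal B N) w * contractedMap B f hf0
          (Ideal.Quotient.mk (zeroIdeal B M) (MonoidAlgebra.single (s : M) 1)) =
        contractedMap B f hf0 (Ideal.Quotient.mk (zeroIdeal B M) a)
      rw [contractedMap_mk, contractedMap_mk, mapDomainRingHom_eq B f
        (MonoidAlgebra.single (s : M) 1), MonoidAlgebra.mapDomain_single, ← map_mul, hws]
    · intro x y h
      obtain ⟨a, rfl⟩ := Ideal.Quotient.mk_surjective x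
      obtain ⟨b, rfl⟩ := Ideal.Quotient.mk_surjective y
      rw [halg, contractedMap_mk, contractedMap_mk,
        Ideal.Quotient.mk_eq_mk_iff_sub_mem, ← map_sub, mapDomainRingHom_eq] at h
      obtain ⟨s, hs⟩ := key f hf0 (a - b) h
      refine ⟨⟨monoidToContracted B M s, ⟨s, s.2, rfl⟩⟩, ?_⟩
      show Ideal.Quotient.mk (zeroIdeal B M) (MonoidAlgebra.single (s : M) 1) *
          Ideal.Quotient.mk (zeroIdeal B M) a =
        Ideal.Quotient.mk (zeroIdeal B M) (MonoidAlgebra.single (s : M) 1) *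
          Ideal.Quotient.mk (zeroIdeal B M) b
      rw [← map_mul, ← map_mul, Ideal.Quotient.mk_eq_mk_iff_sub_mem, ← mul_sub]
      exact hs
  let E := IsLocalization.algEquiv (S.map (monoidToContracted B M))
    (Localization (S.map (monoidToContracted B M))) (ContractedMonoidAlgebra B N)
  refine ⟨E.toRingEquiv, ?_, ?_⟩
  · intro b
    show E _ = _
    rw [AlgEquiv.commutes, halg, contractedMap_mk, mapDomainRingHom_eq,
      MonoidAlgebra.mapDomain_single, map_one]
  · intro m
    show E _ = _
    rw [AlgEquiv.commutes, halg, contractedMap_mk, mapDomainRingHom_eq,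
      MonoidAlgebra.mapDomain_single]
end

section
/- For the projective line over a commutative ring B with its standard two-chart affine covering U = {U_0, U_1}, and d ≥ 0, the 0-th Čech cohomology H^0(ℙ¹_B, O(d); U) is a free B-module of rank d + 1, and H^1(ℙ¹_B, O(d); U) = 0. -/
/-- The Čech complex differential of `O(d)` on `ℙ¹_B` for the standard two-chart covering:
`B[t] × B[t⁻¹] → B[t,t⁻¹]`, `(f, g) ↦ f − t^d · g`, where `B[t⁻¹]` is embedded via
`t ↦ T⁻¹` into the Laurent polynomials. -/
noncomputable def cechP1 (B : Type*) [CommRing B] (d : ℤ) :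
    Polynomial B × Polynomial B →ₗ[B] LaurentPolynomial B :=
  (Polynomial.toLaurentAlg.toLinearMap.comp (LinearMap.fst B (Polynomial B) (Polynomial B))) -
    ((LinearMap.mulLeft B (LaurentPolynomial.T d)).comp
      ((Polynomial.aeval (LaurentPolynomial.T (-1))).toLinearMap.comp
        (LinearMap.snd B (Polynomial B) (Polynomial B))))

open Polynomial LaurentPolynomial

namespace CechP1Aux

variable {B : Type*} [CommRing B]

lemma aeval_Tneg (g : Polynomial B) :
    Polynomial.aeval (T (-1) : LaurentPolynomial B) g = invert (toLaurent g) := by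
  have h : (invert.toAlgHom.comp toLaurentAlg : Polynomial B →ₐ[B] LaurentPolynomial B)
      = aeval (T (-1)) := by
    apply Polynomial.algHom_ext
    simp [Polynomial.toLaurentAlg_apply]
  simpa [Polynomial.toLaurentAlg_apply] using (DFunLike.congr_fun h g).symm

lemma cechP1_apply (d : ℤ) (f g : Polynomial B) :
    cechP1 B d (f, g) = toLaurent f - T d * invert (toLaurent g) := by
  simp [cechP1, aeval_Tneg, Polynomial.toLaurentAlg_apply]

lemma mem_ker_iff (d : ℤ) (f g : Polynomial B) :
    (f, g) ∈ LinearMap.ker (cechP1 B d) ↔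
      toLaurent f = T d * invert (toLaurent g) := by
  rw [LinearMap.mem_ker, cechP1_apply, sub_eq_zero]

lemma coeff_toLaurent_apply (f : Polynomial B) (n : ℤ) :
    (toLaurent f).coeff n = if 0 ≤ n then f.coeff n.toNat else 0 := by
  rw [LaurentPolynomial.coeff_toLaurent]
  rcases le_or_gt 0 n with hn | hn
  · lift n to ℕ using hn
    rw [if_pos (Int.natCast_nonneg n)]
    have := Finsupp.mapDomain_apply (f := (Nat.castEmbedding : ℕ ↪ ℤ))
      (fun a b hab => by exact Nat.cast_injective hab) f.toFinsupp.coeff n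
    exact this
  · rw [if_neg (not_le.2 hn), Finsupp.mapDomain_notin_range]
    rintro ⟨k, hk⟩
    change (k : ℤ) = n at hk
    omega

lemma T_mul_apply (m : ℤ) (q : B[T;T⁻¹]) (n : ℤ) :
    ((T m * q : B[T;T⁻¹])).coeff n = q.coeff (n - m) := by
  have h := AddMonoidAlgebra.coeff_single_mul_apply q (1 : B) m n
  rw [show (T m : B[T;T⁻¹]) = AddMonoidAlgebra.single m 1 from rfl, h, one_mul]
  congr 1
  omega

lemma ker_coeff {d : ℕ} {f g : Polynomial B}
    (h : toLaurent f = T (d : ℤ) * invert (toLaurent g)) (n : ℤ) :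
    (if 0 ≤ n then f.coeff n.toNat else 0)
      = if 0 ≤ (d : ℤ) - n then g.coeff ((d : ℤ) - n).toNat else 0 := by
  have := congrArg (fun p => AddMonoidAlgebra.coeff p n) h
  rw [coeff_toLaurent_apply, T_mul_apply, invert_apply, coeff_toLaurent_apply] at this
  rw [this]
  have h1 : -(n - (d : ℤ)) = (d : ℤ) - n := by omega
  rw [h1]

lemma ker_f_coeff {d : ℕ} {f g : Polynomial B}
    (h : toLaurent f = T (d : ℤ) * invert (toLaurent g)) {n : ℕ} (hn : d < n) :
    f.coeff n = 0 := by
  have := ker_coeff h (n : ℤ)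
  rw [if_pos (by positivity), if_neg (by omega)] at this
  simpa using this

lemma ker_g_coeff {d : ℕ} {f g : Polynomial B}
    (h : toLaurent f = T (d : ℤ) * invert (toLaurent g)) {n : ℕ} (hn : d < n) :
    g.coeff n = 0 := by
  have := ker_coeff h ((d : ℤ) - n)
  rw [if_neg (by omega), if_pos (by omega)] at this
  have h2 : ((d : ℤ) - ((d : ℤ) - n)).toNat = n := by omega
  rw [h2] at this
  exact this.symm

lemma ker_fg_coeff {d : ℕ} {f g : Polynomial B}
    (h : toLaurent f = T (d : ℤ) * invert (toLaurent g)) {i : ℕ} (hi : i ≤ d) :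
    f.coeff i = g.coeff (d - i) := by
  have := ker_coeff h (i : ℤ)
  rw [if_pos (by positivity), if_pos (by omega)] at this
  have h2 : ((d : ℤ) - i).toNat = d - i := by omega
  rw [h2] at this
  simpa using this

lemma ker_decomp {d : ℕ} {f g : Polynomial B}
    (h : toLaurent f = T (d : ℤ) * invert (toLaurent g)) :
    (f, g) = ∑ i : Fin (d + 1),
      f.coeff (i : ℕ) • ((X : Polynomial B) ^ (i : ℕ), (X : Polynomial B) ^ (d - (i : ℕ))) := by
  have hfd : f.natDegree < d + 1 := by
    have : f.natDegree ≤ d := natDegree_le_iff_coeff_eq_zero.2 fun N hN => ker_f_coeff h hN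
    omega
  have hgd : g.natDegree < d + 1 := by
    have : g.natDegree ≤ d := natDegree_le_iff_coeff_eq_zero.2 fun N hN => ker_g_coeff h hN
    omega
  rw [Prod.ext_iff]
  constructor
  · rw [Prod.fst_sum]
    simp only [Prod.smul_mk, Prod.fst]
    rw [Fin.sum_univ_eq_sum_range (fun i => f.coeff i • (X : Polynomial B) ^ i)]
    simp only [smul_X_eq_monomial]
    exact as_sum_range' f (d + 1) hfd
  · rw [Prod.snd_sum]
    simp only [Prod.smul_mk, Prod.snd]
    rw [Fin.sum_univ_eq_sum_range (fun i => f.coeff i • (X : Polynomial B) ^ (d - i))]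
    have key : ∀ i ∈ Finset.range (d + 1),
        f.coeff i • (X : Polynomial B) ^ (d - i) = g.coeff (d - i) • (X : Polynomial B) ^ (d - i) := by
      intro i hi
      rw [ker_fg_coeff h (by simpa using Nat.lt_succ_iff.1 (Finset.mem_range.1 hi))]
    rw [Finset.sum_congr rfl key]
    have hrefl := Finset.sum_range_reflect (fun i => g.coeff i • (X : Polynomial B) ^ i) (d + 1)
    simp only [Nat.add_sub_cancel] at hrefl
    rw [hrefl]
    simp only [smul_X_eq_monomial]
    exact as_sum_range' g (d + 1) hgd

end CechP1Aux

open CechP1Aux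

/-- **Cohomology of `O(d)` on `ℙ¹_B` for `d ≥ 0`.** With respect to the standard two-chart
covering, `H⁰(ℙ¹_B, O(d))` (the kernel of the Čech differential) is a free `B`-module of
rank `d + 1`, and `H¹(ℙ¹_B, O(d))` vanishes (the Čech differential is surjective). -/
theorem stmt_16 (B : Type*) [CommRing B] (d : ℕ) :
    Nonempty (Module.Basis (Fin (d + 1)) B (LinearMap.ker (cechP1 B (d : ℤ)))) ∧
    LinearMap.range (cechP1 B (d : ℤ)) = ⊤ := by
  set v : Fin (d + 1) → Polynomial B × Polynomial B :=
    fun i => ((X : Polynomial B) ^ (i : ℕ), (X : Polynomial B) ^ (d - (i : ℕ))) with hv_def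
  have hv : ∀ i, v i ∈ LinearMap.ker (cechP1 B (d : ℤ)) := by
    intro i
    rw [hv_def, mem_ker_iff]
    rw [Polynomial.toLaurent_X_pow, Polynomial.toLaurent_X_pow, invert_T, ← T_add]
    congr 1
    have : (i : ℕ) ≤ d := Nat.lt_succ_iff.1 i.isLt
    omega
  set w : Fin (d + 1) → LinearMap.ker (cechP1 B (d : ℤ)) := fun i => ⟨v i, hv i⟩ with hw_def
  have hindep : LinearIndependent B w := by
    have h1 : LinearIndependent B (fun i : Fin (d + 1) => (X : Polynomial B) ^ (i : ℕ)) := by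
      have := (Polynomial.basisMonomials B).linearIndependent.comp
        (fun i : Fin (d + 1) => (i : ℕ)) Fin.val_injective
      simpa [Polynomial.coe_basisMonomials, Function.comp_def, X_pow_eq_monomial] using this
    refine LinearIndependent.of_comp
      ((LinearMap.fst B (Polynomial B) (Polynomial B)).comp
        (Submodule.subtype (LinearMap.ker (cechP1 B (d : ℤ))))) ?_
    exact h1
  have hspan : ⊤ ≤ Submodule.span B (Set.range w) := by
    rintro ⟨⟨f, g⟩, hfg⟩ -
    have hker : toLaurent f = T (d : ℤ) * invert (toLaurent g) := (mem_ker_iff _ f g).1 hfg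
    have hd := ker_decomp hker
    have heq : (⟨(f, g), hfg⟩ : LinearMap.ker (cechP1 B (d : ℤ)))
        = ∑ i : Fin (d + 1), f.coeff (i : ℕ) • w i := by
      apply Subtype.ext
      simpa [hw_def, hv_def] using hd
    rw [heq]
    exact Submodule.sum_mem _ fun i _ =>
      Submodule.smul_mem _ _ (Submodule.subset_span ⟨i, rfl⟩)
  refine ⟨⟨Module.Basis.mk hindep hspan⟩, ?_⟩
  rw [eq_top_iff]
  rintro p -
  refine p.induction_on' (fun p q hp hq => Submodule.add_mem _ hp hq) (fun n a => ?_)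
  rcases le_or_gt 0 n with hn | hn
  · refine ⟨(Polynomial.C a * X ^ n.toNat, 0), ?_⟩
    rw [cechP1_apply]
    simp [Polynomial.toLaurent_C_mul_X_pow, Int.toNat_of_nonneg hn]
  · refine ⟨(0, -(Polynomial.C a * X ^ ((d : ℤ) - n).toNat)), ?_⟩
    have hm : ((((d : ℤ) - n).toNat : ℤ)) = (d : ℤ) - n := Int.toNat_of_nonneg (by omega)
    rw [cechP1_apply]
    simp only [map_zero, map_neg, map_mul, Polynomial.toLaurent_C, Polynomial.toLaurent_X_pow,
      invert_C, invert_T, hm, zero_sub, neg_neg, mul_neg]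
    rw [mul_left_comm, ← T_add]
    congr 2
    omega
end

section
/- For the projective line over a commutative ring B with its standard two-chart covering and d ≤ −2, the first Čech cohomology H^1(ℙ¹_B, O(d); U) is a free B-module of rank −d − 1, and H^0(ℙ¹_B, O(d); U) = 0. -/
open LaurentPolynomial Polynomial

section Aux

variable {B : Type*} [CommRing B]

lemma aeval_T_neg_one_eq (g : B[X]) :
    Polynomial.aeval (T (-1) : LaurentPolynomial B) g = invert (toLaurent g) := by
  have : Polynomial.aeval (T (-1) : LaurentPolynomial B) =
      (invert.toAlgHom.comp Polynomial.toLaurentAlg) := by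
    apply Polynomial.algHom_ext
    simp [Polynomial.toLaurentAlg_apply]
  rw [this]
  simp [Polynomial.toLaurentAlg_apply]

lemma amaSingle_mem_supported {s : Set ℤ} {n : ℤ} (a : B) (h : n ∈ s) :
    (AddMonoidAlgebra.single n a : LaurentPolynomial B) ∈ AddMonoidAlgebra.supported B B s := by
  rw [AddMonoidAlgebra.mem_supported']
  intro m hm
  have hne : m ≠ n := fun e => hm (e ▸ h)
  simp [hne, Ne.symm hne, -single_eq_C_mul_T, AddMonoidAlgebra.coeff_single]

lemma amaSupported_union (s t : Set ℤ) :
    (AddMonoidAlgebra.supported B B (s ∪ t) : Submodule B (LaurentPolynomial B)) =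
      AddMonoidAlgebra.supported B B s ⊔ AddMonoidAlgebra.supported B B t := by
  simp only [AddMonoidAlgebra.supported_eq_map, Finsupp.supported_union, Submodule.map_sup]

lemma amaDisjoint_supported {s t : Set ℤ} (h : Disjoint s t) :
    Disjoint (AddMonoidAlgebra.supported B B s : Submodule B (LaurentPolynomial B))
      (AddMonoidAlgebra.supported B B t) := by
  rw [Submodule.disjoint_def]
  intro x h1 h2
  have := (Finsupp.disjoint_supported_supported h).le_bot
    (show (AddMonoidAlgebra.coeffLinearEquiv B x) ∈
      Finsupp.supported B B s ⊓ Finsupp.supported B B t from ⟨h1, h2⟩)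
  rw [Submodule.mem_bot] at this
  exact (AddMonoidAlgebra.coeffLinearEquiv B).injective (by rw [map_zero]; exact this)

lemma amaSupported_univ :
    (AddMonoidAlgebra.supported B B (Set.univ : Set ℤ) : Submodule B (LaurentPolynomial B)) = ⊤ := by
  rw [AddMonoidAlgebra.supported, Finsupp.supported_univ, Submodule.comap_top]

lemma toLaurent_mem_supported (f : B[X]) :
    (toLaurent f : LaurentPolynomial B) ∈ AddMonoidAlgebra.supported B B {n : ℤ | 0 ≤ n} := by
  induction f using Polynomial.induction_on' with
  | add p q hp hq => rw [map_add]; exact Submodule.add_mem _ hp hq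
  | monomial n a =>
      have : toLaurent (Polynomial.monomial n a) =
          (AddMonoidAlgebra.single (n : ℤ) a : LaurentPolynomial B) := by
        rw [← Polynomial.C_mul_X_pow_eq_monomial, Polynomial.toLaurent_C_mul_X_pow,
          single_eq_C_mul_T]
      rw [this]
      exact amaSingle_mem_supported a (by simp)

lemma psi_mem_supported (d : ℤ) (g : B[X]) :
    (T d * Polynomial.aeval (T (-1) : LaurentPolynomial B) g : LaurentPolynomial B)
      ∈ AddMonoidAlgebra.supported B B {n : ℤ | n ≤ d} := by
  induction g using Polynomial.induction_on' with
  | add p q hp hq => rw [map_add, mul_add]; exact Submodule.add_mem _ hp hq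
  | monomial n a =>
      have : (T d * Polynomial.aeval (T (-1) : LaurentPolynomial B)
          (Polynomial.monomial n a) : LaurentPolynomial B) =
          (AddMonoidAlgebra.single (d - n) a : LaurentPolynomial B) := by
        rw [← Polynomial.C_mul_X_pow_eq_monomial, map_mul, map_pow, single_eq_C_mul_T]
        rw [Polynomial.aeval_C, Polynomial.aeval_X, T_pow,
          show ((n : ℤ) * -1) = -(n : ℤ) by ring, T_sub, ← LaurentPolynomial.C_eq_algebraMap]
        ring
      rw [this]
      exact amaSingle_mem_supported a (by simp)

end Aux

section Aux2

variable {B : Type*} [CommRing B]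

lemma cechP1_apply (d : ℤ) (f g : B[X]) :
    cechP1 B d (f, g) = toLaurent f - T d * Polynomial.aeval (T (-1) : LaurentPolynomial B) g := by
  simp [cechP1, Polynomial.toLaurentAlg_apply]

lemma range_cechP1 (d : ℤ) :
    LinearMap.range (cechP1 B d) =
      AddMonoidAlgebra.supported B B ({n : ℤ | 0 ≤ n} ∪ {n : ℤ | n ≤ d}) := by
  rw [amaSupported_union]
  apply le_antisymm
  · rintro x ⟨⟨f, g⟩, rfl⟩
    rw [cechP1_apply]
    exact Submodule.sub_mem _ (Submodule.mem_sup_left (toLaurent_mem_supported f))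
      (Submodule.mem_sup_right (psi_mem_supported d g))
  · apply sup_le
    · rw [AddMonoidAlgebra.supported_eq_span_single, Submodule.span_le]
      rintro x ⟨n, hn, rfl⟩
      refine ⟨(Polynomial.X ^ n.toNat, 0), ?_⟩
      show cechP1 B d (Polynomial.X ^ n.toNat, 0) = AddMonoidAlgebra.single n 1
      rw [cechP1_apply, map_zero, mul_zero, sub_zero, Polynomial.toLaurent_X_pow,
        single_eq_C_mul_T, map_one, one_mul]
      congr 1
      exact Int.toNat_of_nonneg hn
    · rw [AddMonoidAlgebra.supported_eq_span_single, Submodule.span_le]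
      rintro x ⟨m, hm, rfl⟩
      refine ⟨(0, -(Polynomial.X ^ (d - m).toNat)), ?_⟩
      show cechP1 B d (0, -(Polynomial.X ^ (d - m).toNat)) = AddMonoidAlgebra.single m 1
      rw [cechP1_apply, map_zero, map_neg, mul_neg, zero_sub, neg_neg, map_pow,
        Polynomial.aeval_X, T_pow, single_eq_C_mul_T, map_one, one_mul, ← T_add]
      congr 1
      have : ((d - m).toNat : ℤ) = d - m := Int.toNat_of_nonneg (by simpa using hm)
      omega

end Aux2

/-- **Cohomology of `O(d)` on `ℙ¹_B` for `d ≤ -2`.** With respect to the standard two-chart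
covering, `H⁰(ℙ¹_B, O(d))` (the kernel of the Čech differential) vanishes, and
`H¹(ℙ¹_B, O(d))` (the cokernel) is a free `B`-module of rank `−d − 1`. -/
theorem stmt_17 (B : Type*) [CommRing B] (d : ℤ) (hd : d ≤ -2) :
    LinearMap.ker (cechP1 B d) = ⊥ ∧
    Nonempty (Module.Basis (Fin (d.natAbs - 1)) B
      (LaurentPolynomial B ⧸ LinearMap.range (cechP1 B d))) := by
  constructor
  · rw [eq_bot_iff]
    rintro ⟨f, g⟩ hfg
    rw [LinearMap.mem_ker, cechP1_apply, sub_eq_zero] at hfg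
    have hdisj : Disjoint (AddMonoidAlgebra.supported B B {n : ℤ | 0 ≤ n})
        (AddMonoidAlgebra.supported B B {n : ℤ | n ≤ d}) := by
      apply amaDisjoint_supported
      rw [Set.disjoint_left]
      intro n hn hn'
      simp only [Set.mem_setOf_eq] at hn hn'
      omega
    have hf : f = 0 := by
      have := hdisj.le_bot ⟨toLaurent_mem_supported f, hfg ▸ psi_mem_supported d g⟩
      rw [Submodule.mem_bot] at this
      exact Polynomial.toLaurent_eq_zero.mp this
    have h0 : toLaurent f = (0 : LaurentPolynomial B) := by rw [hf]; simp
    have hg : g = 0 := by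
      rw [h0] at hfg
      have h1 : Polynomial.aeval (T (-1) : LaurentPolynomial B) g = 0 :=
        ((isUnit_T d).mul_right_eq_zero).mp hfg.symm
      rw [aeval_T_neg_one_eq] at h1
      have : toLaurent g = 0 := by
        have := congrArg (invert (R := B)) h1
        simpa using this
      exact Polynomial.toLaurent_eq_zero.mp this
    simp [hf, hg, Submodule.mem_bot, Prod.ext_iff]
  · set S : Set ℤ := {n : ℤ | 0 ≤ n} ∪ {n : ℤ | n ≤ d} with hS
    have hcompl : IsCompl (AddMonoidAlgebra.supported B B S) (AddMonoidAlgebra.supported B B Sᶜ) := by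
      constructor
      · exact amaDisjoint_supported disjoint_compl_right
      · rw [codisjoint_iff, ← amaSupported_union, Set.union_compl_self,
          amaSupported_univ]
    have e1 : (LaurentPolynomial B ⧸ LinearMap.range (cechP1 B d)) ≃ₗ[B]
        (LaurentPolynomial B ⧸ AddMonoidAlgebra.supported B B S) :=
      Submodule.quotEquivOfEq _ _ (range_cechP1 d)
    have e2 : (LaurentPolynomial B ⧸ AddMonoidAlgebra.supported B B S) ≃ₗ[B]
        AddMonoidAlgebra.supported B B Sᶜ :=
      Submodule.quotientEquivOfIsCompl _ _ hcompl
    have e3 : (AddMonoidAlgebra.supported B B Sᶜ) ≃ₗ[B] (↥(Sᶜ) →₀ B) :=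
      AddMonoidAlgebra.supportedEquivFinsupp Sᶜ
    have eqv : ↥(Sᶜ) ≃ Fin (d.natAbs - 1) := by
      refine
        { toFun := fun x => ⟨(x.1 - d - 1).toNat, ?_⟩
          invFun := fun i => ⟨d + 1 + (i : ℕ), ?_⟩
          left_inv := ?_
          right_inv := ?_ }
      · have hx := x.2
        simp only [hS, Set.mem_compl_iff, Set.mem_union, Set.mem_setOf_eq, not_or, not_le] at hx
        omega
      · have hi := i.2
        simp only [hS, Set.mem_compl_iff, Set.mem_union, Set.mem_setOf_eq, not_or, not_le]
        omega
      · intro x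
        have hx := x.2
        simp only [hS, Set.mem_compl_iff, Set.mem_union, Set.mem_setOf_eq, not_or, not_le] at hx
        apply Subtype.ext
        simp only
        omega
      · intro i
        apply Fin.ext
        simp only
        omega
    exact ⟨((Finsupp.basisSingleOne : Module.Basis ↥(Sᶜ) B (↥(Sᶜ) →₀ B)).map
      (e3.symm ≪≫ₗ e2.symm ≪≫ₗ e1.symm)).reindex eqv⟩
end
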